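/- Let β1,…,β22 denote the standard basis of ℤ²² and consider the nine vectors v1 = β1+2β2+β4+β6+β10+β18, v2 = β2+β3+β6, v3 = β2+β4+β5, v4 = β7, v5 = β9, v6 = β11, v7 = β15, v8 = β17, v9 = β19. Then the 9×9 Gram matrix with (i,j)-entry v_iᵀ M_{K3} v_j equals M_{6,0,0} (with index order E_x, E_y, E_z, C_{x,1},…,C_{x,6}), and the family v1,…,v9 extends to a ℤ-basis of ℤ²²; in particular the quotient ℤ²²/span_ℤ(v1,…,v9) is torsion-free. -/

import Mathlib

open Matrix

/-- Axis (0 = x, 1 = y, 2 = z) of a basis index `t ≥ 3` (curve classes). -/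
def axOf (k l : ℕ) (t : ℕ) : ℕ :=
  if t < 3 + k then 0 else if t < 3 + k + l then 1 else 2

/-- The intersection matrix `M_{k,l,m}` in the basis
`E_x, E_y, E_z, C_{x,1},…,C_{x,k}, C_{y,1},…,C_{y,l}, C_{z,1},…,C_{z,m}`. -/
def MM (k l m : ℕ) : Matrix (Fin (3 + k + l + m)) (Fin (3 + k + l + m)) ℤ :=
  fun i j =>
    if (i : ℕ) < 3 then
      if (j : ℕ) < 3 then (if i = j then 0 else 2)
      else (if (i : ℕ) = axOf k l j then 1 else 0)
    else
      if (j : ℕ) < 3 then (if (j : ℕ) = axOf k l i then 1 else 0)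
      else (if i = j then -2 else 0)

/-- Block index of `t ∈ {0,…,21}` for the decomposition `M₂ ⊕ M₂ ⊕ M₂ ⊕ M₈ ⊕ M₈`. -/
def blkOf (t : ℕ) : ℕ :=
  if t < 2 then 0 else if t < 4 then 1 else if t < 6 then 2 else if t < 14 then 3 else 4

/-- Offset of `t ∈ {0,…,21}` within its block. -/
def offOf (t : ℕ) : ℕ :=
  if t < 2 then t else if t < 4 then t - 2 else if t < 6 then t - 4
  else if t < 14 then t - 6 else t - 14

/-- The entries of the 8×8 block `M₈` (0-indexed): diagonal `−2`, entry `1` at the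
(1-indexed) pairs `(1,4),(2,3),(3,4),(4,5),(5,6),(6,7),(7,8)` and symmetrically. -/
def M8e (i j : ℕ) : ℤ :=
  if i = j then -2
  else if (min i j, max i j) ∈
      [((0 : ℕ), (3 : ℕ)), (1, 2), (2, 3), (3, 4), (4, 5), (5, 6), (6, 7)] then 1
  else 0

/-- The K3 lattice matrix `M_{K3} = M₂ ⊕ M₂ ⊕ M₂ ⊕ M₈ ⊕ M₈`, where `M₂ = [[0,1],[1,0]]`. -/
def MK3 : Matrix (Fin 22) (Fin 22) ℤ :=
  fun i j =>
    if blkOf i ≠ blkOf j then 0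
    else if blkOf i < 3 then (if i = j then 0 else 1)
    else M8e (offOf i) (offOf j)

/-- The standard basis vector `β_t` (1-indexed, `t ∈ {1,…,22}`) of `ℤ²²`. -/
def bv (t : ℕ) : Fin 22 → ℤ := fun i => if (i : ℕ) + 1 = t then 1 else 0

/-- The nine vectors `𝓑_{6,0,0} ⊆ ℤ²²`. -/
def v600 : Fin 9 → (Fin 22 → ℤ) :=
  ![bv 1 + 2 • bv 2 + bv 4 + bv 6 + bv 10 + bv 18,
    bv 2 + bv 3 + bv 6,
    bv 2 + bv 4 + bv 5,
    bv 7, bv 9, bv 11, bv 15, bv 17, bv 19]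

/-- Extension matrix: columns 0–8 are the vectors `v600`. -/
def Bm : Matrix (Fin 22) (Fin 22) ℤ :=
  !![1, 0, 0, 0, 0, 0, 0, 0, 0, 0, 0, 0, 0, 0, 0, 0, 0, 0, 0, 0, 0, 0;
    2, 1, 1, 0, 0, 0, 0, 0, 0, 1, 0, 0, 0, 0, 0, 0, 0, 0, 0, 0, 0, 0;
    0, 1, 0, 0, 0, 0, 0, 0, 0, 0, 0, 0, 0, 0, 0, 0, 0, 0, 0, 0, 0, 0;
    1, 0, 1, 0, 0, 0, 0, 0, 0, 0, 1, 0, 0, 0, 0, 0, 0, 0, 0, 0, 0, 0;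
    0, 0, 1, 0, 0, 0, 0, 0, 0, 0, 0, 0, 0, 0, 0, 0, 0, 0, 0, 0, 0, 0;
    1, 1, 0, 0, 0, 0, 0, 0, 0, 0, 0, 1, 0, 0, 0, 0, 0, 0, 0, 0, 0, 0;
    0, 0, 0, 1, 0, 0, 0, 0, 0, 0, 0, 0, 0, 0, 0, 0, 0, 0, 0, 0, 0, 0;
    0, 0, 0, 0, 0, 0, 0, 0, 0, 0, 0, 0, 1, 0, 0, 0, 0, 0, 0, 0, 0, 0;
    0, 0, 0, 0, 1, 0, 0, 0, 0, 0, 0, 0, 0, 0, 0, 0, 0, 0, 0, 0, 0, 0;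
    1, 0, 0, 0, 0, 0, 0, 0, 0, 0, 0, 0, 0, 1, 0, 0, 0, 0, 0, 0, 0, 0;
    0, 0, 0, 0, 0, 1, 0, 0, 0, 0, 0, 0, 0, 0, 0, 0, 0, 0, 0, 0, 0, 0;
    0, 0, 0, 0, 0, 0, 0, 0, 0, 0, 0, 0, 0, 0, 1, 0, 0, 0, 0, 0, 0, 0;
    0, 0, 0, 0, 0, 0, 0, 0, 0, 0, 0, 0, 0, 0, 0, 0, 0, 0, 0, 0, 0, 1;
    0, 0, 0, 0, 0, 0, 0, 0, 0, 0, 0, 0, 0, 0, 0, 1, 0, 0, 0, 0, 0, 0;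
    0, 0, 0, 0, 0, 0, 1, 0, 0, 0, 0, 0, 0, 0, 0, 0, 0, 0, 0, 0, 0, 0;
    0, 0, 0, 0, 0, 0, 0, 0, 0, 0, 0, 0, 0, 0, 0, 0, 1, 0, 0, 0, 0, 0;
    0, 0, 0, 0, 0, 0, 0, 1, 0, 0, 0, 0, 0, 0, 0, 0, 0, 0, 0, 0, 0, 0;
    1, 0, 0, 0, 0, 0, 0, 0, 0, 0, 0, 0, 0, 0, 0, 0, 0, 1, 0, 0, 0, 0;
    0, 0, 0, 0, 0, 0, 0, 0, 1, 0, 0, 0, 0, 0, 0, 0, 0, 0, 0, 0, 0, 0;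
    0, 0, 0, 0, 0, 0, 0, 0, 0, 0, 0, 0, 0, 0, 0, 0, 0, 0, 1, 0, 0, 0;
    0, 0, 0, 0, 0, 0, 0, 0, 0, 0, 0, 0, 0, 0, 0, 0, 0, 0, 0, 1, 0, 0;
    0, 0, 0, 0, 0, 0, 0, 0, 0, 0, 0, 0, 0, 0, 0, 0, 0, 0, 0, 0, 1, 0]

/-- Inverse of `Bm`. -/
def BmInv : Matrix (Fin 22) (Fin 22) ℤ :=
  !![1, 0, 0, 0, 0, 0, 0, 0, 0, 0, 0, 0, 0, 0, 0, 0, 0, 0, 0, 0, 0, 0;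
    0, 0, 1, 0, 0, 0, 0, 0, 0, 0, 0, 0, 0, 0, 0, 0, 0, 0, 0, 0, 0, 0;
    0, 0, 0, 0, 1, 0, 0, 0, 0, 0, 0, 0, 0, 0, 0, 0, 0, 0, 0, 0, 0, 0;
    0, 0, 0, 0, 0, 0, 1, 0, 0, 0, 0, 0, 0, 0, 0, 0, 0, 0, 0, 0, 0, 0;
    0, 0, 0, 0, 0, 0, 0, 0, 1, 0, 0, 0, 0, 0, 0, 0, 0, 0, 0, 0, 0, 0;
    0, 0, 0, 0, 0, 0, 0, 0, 0, 0, 1, 0, 0, 0, 0, 0, 0, 0, 0, 0, 0, 0;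
    0, 0, 0, 0, 0, 0, 0, 0, 0, 0, 0, 0, 0, 0, 1, 0, 0, 0, 0, 0, 0, 0;
    0, 0, 0, 0, 0, 0, 0, 0, 0, 0, 0, 0, 0, 0, 0, 0, 1, 0, 0, 0, 0, 0;
    0, 0, 0, 0, 0, 0, 0, 0, 0, 0, 0, 0, 0, 0, 0, 0, 0, 0, 1, 0, 0, 0;
    -2, 1, -1, 0, -1, 0, 0, 0, 0, 0, 0, 0, 0, 0, 0, 0, 0, 0, 0, 0, 0, 0;
    -1, 0, 0, 1, -1, 0, 0, 0, 0, 0, 0, 0, 0, 0, 0, 0, 0, 0, 0, 0, 0, 0;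
    -1, 0, -1, 0, 0, 1, 0, 0, 0, 0, 0, 0, 0, 0, 0, 0, 0, 0, 0, 0, 0, 0;
    0, 0, 0, 0, 0, 0, 0, 1, 0, 0, 0, 0, 0, 0, 0, 0, 0, 0, 0, 0, 0, 0;
    -1, 0, 0, 0, 0, 0, 0, 0, 0, 1, 0, 0, 0, 0, 0, 0, 0, 0, 0, 0, 0, 0;
    0, 0, 0, 0, 0, 0, 0, 0, 0, 0, 0, 1, 0, 0, 0, 0, 0, 0, 0, 0, 0, 0;
    0, 0, 0, 0, 0, 0, 0, 0, 0, 0, 0, 0, 0, 1, 0, 0, 0, 0, 0, 0, 0, 0;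
    0, 0, 0, 0, 0, 0, 0, 0, 0, 0, 0, 0, 0, 0, 0, 1, 0, 0, 0, 0, 0, 0;
    -1, 0, 0, 0, 0, 0, 0, 0, 0, 0, 0, 0, 0, 0, 0, 0, 0, 1, 0, 0, 0, 0;
    0, 0, 0, 0, 0, 0, 0, 0, 0, 0, 0, 0, 0, 0, 0, 0, 0, 0, 0, 1, 0, 0;
    0, 0, 0, 0, 0, 0, 0, 0, 0, 0, 0, 0, 0, 0, 0, 0, 0, 0, 0, 0, 1, 0;
    0, 0, 0, 0, 0, 0, 0, 0, 0, 0, 0, 0, 0, 0, 0, 0, 0, 0, 0, 0, 0, 1;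
    0, 0, 0, 0, 0, 0, 0, 0, 0, 0, 0, 0, 1, 0, 0, 0, 0, 0, 0, 0, 0, 0]

set_option maxHeartbeats 1000000 in
lemma Bm_mul_inv : Bm * BmInv = 1 := by decide

set_option maxHeartbeats 1000000 in
lemma Bm_inv_mul : BmInv * Bm = 1 := by decide

instance instInvBm : Invertible Bm := ⟨BmInv, Bm_inv_mul, Bm_mul_inv⟩

noncomputable def bB : Module.Basis (Fin 22) ℤ (Fin 22 → ℤ) :=
  (Pi.basisFun ℤ (Fin 22)).map (Bm.toLinearEquiv' instInvBm)

lemma bB_apply (j : Fin 22) : bB j = fun r => Bm r j := by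
  have h1 : bB j = Matrix.toLin' Bm (Pi.single j 1) := by
    rw [bB, Module.Basis.map_apply, Pi.basisFun_apply]; rfl
  rw [h1, Matrix.toLin'_apply, Matrix.mulVec_single]
  simp
  rfl

set_option maxHeartbeats 1000000 in
lemma bB_key : ∀ i : Fin 9, bB (Fin.castLE (by norm_num) i) = v600 i := by
  intro i
  rw [bB_apply]
  fin_cases i <;> decide

set_option maxHeartbeats 4000000 in
/-- The Gram matrix of the nine vectors in `𝓑_{6,0,0}` with respect to `M_{K3}` is
`M_{6,0,0}`, the family extends to a `ℤ`-basis of `ℤ²²`, and the quotient of `ℤ²²`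
by its span is torsion-free. -/
theorem B600_primitive :
    (∀ i j : Fin 9, v600 i ⬝ᵥ MK3.mulVec (v600 j) = MM 6 0 0 i j) ∧
    (∃ b : Module.Basis (Fin 22) ℤ (Fin 22 → ℤ),
      ∀ i : Fin 9, b (Fin.castLE (by norm_num) i) = v600 i) ∧
    (∀ (n : ℤ) (x : (Fin 22 → ℤ) ⧸ Submodule.span ℤ (Set.range v600)),
      n ≠ 0 → n • x = 0 → x = 0) := by
  have h9 : (9:ℕ) ≤ 22 := by norm_num
  refine ⟨by intro i j; fin_cases i <;> fin_cases j <;> decide, ⟨bB, bB_key⟩, ?_⟩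
  intro n x hn hx
  obtain ⟨y, rfl⟩ := Submodule.Quotient.mk_surjective _ x
  rw [← Submodule.Quotient.mk_smul] at hx
  rw [Submodule.Quotient.mk_eq_zero] at hx ⊢
  have hr : Set.range v600 = bB '' Set.range (Fin.castLE h9) := by
    rw [show v600 = ⇑bB ∘ Fin.castLE h9 from funext fun i => (bB_key i).symm,
      Set.range_comp]
  rw [hr, Module.Basis.mem_span_image] at hx ⊢
  intro j hj
  apply hx
  simp only [Finset.mem_coe, Finsupp.mem_support_iff] at hj ⊢
  rw [_root_.map_smul, Finsupp.smul_apply, smul_eq_mul]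
  exact mul_ne_zero hn hj
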